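/- arXiv:1409.8580 — 2 statements merged into one kernel-verified Lean document; each statement's English description precedes it below -/
import Mathlib

section
/- Let U be a finite set, q ≥ 1, exponents p = (p_1,...,p_q) ∈ ℕ^q with ‖p‖_1 = p_1 + ... + p_q > 0, and nonnegative functions f_1,...,f_q : U → ℝ. Then ∏_{i=1}^q (∑_{u∈U} f_i(u))^{p_i} = ∑_{l=1}^{min(‖p‖_1,|U|)} ∑_{M ∈ M_l} C_M ∑_{V ⊆ U, |V|=l} ∏_{i=1}^q ∏_{j=1}^l f_i(v_j)^{m_{ij}}, where M_l is the set of q×l matrices with nonnegative integer entries whose j-th column sums are strictly positive for all j and whose i-th row sums equal p_i for all i, V = {v_1,...,v_l} is an enumeration of V, and C_M = ∏_{i=1}^q p_i! / ∏_{j=1}^l m_{ij}!. -/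
open scoped BigOperators
open Finset
set_option linter.unusedSectionVars false
set_option linter.unusedVariables false

namespace SumProdExpAux

variable {U : Type*} [Fintype U] [DecidableEq U] {q : ℕ}

/-- Support of a multiplicity matrix. -/
def supp (m : Fin q → U → ℕ) : Finset U := univ.filter fun u => 0 < ∑ i, m i u

lemma notmem_supp {m : Fin q → U → ℕ} {u : U} (h : u ∉ supp m) (i : Fin q) : m i u = 0 := by
  simp only [supp, mem_filter, mem_univ, true_and, not_lt, Nat.le_zero] at h
  exact Finset.sum_eq_zero_iff.mp h i (mem_univ i)

variable {N : ℕ}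

/-- The matrix associated to a pair (matrix over `Fin l`, embedding). -/
def phi {l : ℕ} (x : (Fin q → Fin l → Fin (N + 1)) × (Fin l ↪ U)) : Fin q → U → ℕ :=
  fun i u => ∑ j, if x.2 j = u then (x.1 i j : ℕ) else 0

lemma phi_apply_emb {l : ℕ} (x : (Fin q → Fin l → Fin (N + 1)) × (Fin l ↪ U))
    (i : Fin q) (j : Fin l) : phi x i (x.2 j) = x.1 i j := by
  rw [phi, Finset.sum_eq_single_of_mem j (mem_univ j)]
  · simp
  · intro j' _ hj'
    simp only [ite_eq_right_iff]
    intro h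
    exact absurd (x.2.injective h) hj'

lemma phi_apply_of_notmem {l : ℕ} (x : (Fin q → Fin l → Fin (N + 1)) × (Fin l ↪ U))
    (i : Fin q) {u : U} (h : ∀ j, x.2 j ≠ u) : phi x i u = 0 := by
  rw [phi]
  exact Finset.sum_eq_zero fun j _ => if_neg (h j)

lemma prod_emb {l : ℕ} (v : Fin l ↪ U) (g : U → ℝ) (h1 : ∀ u, (∀ j, v j ≠ u) → g u = 1) :
    ∏ u, g u = ∏ j, g (v j) := by
  have h2 : ∏ j, g (v j) = ∏ u ∈ univ.image v, g u :=
    (Finset.prod_image fun a _ b _ h => v.injective h).symm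
  rw [h2]
  refine (Finset.prod_subset (subset_univ _) ?_).symm
  intro u _ hu
  refine h1 u fun j hj => hu ?_
  exact mem_image.mpr ⟨j, mem_univ j, hj⟩

/-- The condition on pairs. -/
def Cond (p : Fin q → ℕ) {l : ℕ} (x : (Fin q → Fin l → Fin (N + 1)) × (Fin l ↪ U)) : Prop :=
  (∀ j : Fin l, 0 < ∑ i : Fin q, (x.1 i j : ℕ)) ∧
    (∀ i : Fin q, ∑ j : Fin l, (x.1 i j : ℕ) = p i)

instance (p : Fin q → ℕ) {l : ℕ} (x : (Fin q → Fin l → Fin (N + 1)) × (Fin l ↪ U)) :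
    Decidable (Cond p x) := by unfold Cond; infer_instance

section CondLemmas

variable {p : Fin q → ℕ} {l : ℕ} {x : (Fin q → Fin l → Fin (N + 1)) × (Fin l ↪ U)}
  (hx : Cond p x)

lemma row_sum_phi (hx : Cond p x) (i : Fin q) : ∑ u, phi x i u = p i := by
  unfold phi
  rw [Finset.sum_comm]
  rw [← hx.2 i]
  refine Finset.sum_congr rfl fun j _ => ?_
  rw [Finset.sum_ite_eq univ (x.2 j) (fun _ => (x.1 i j : ℕ))]
  simp

lemma supp_phi (hx : Cond p x) : supp (phi x) = univ.image x.2 := by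
  ext u
  simp only [supp, mem_filter, mem_univ, true_and, mem_image]
  constructor
  · intro hu
    by_contra hc
    push_neg at hc
    have : ∀ i, phi x i u = 0 := fun i => phi_apply_of_notmem x i hc
    simp [this] at hu
  · rintro ⟨j, _, rfl⟩
    have : ∀ i, phi x i (x.2 j) = x.1 i j := fun i => phi_apply_emb x i j
    simp only [this]
    exact hx.1 j

lemma card_supp_phi (hx : Cond p x) : (supp (phi x)).card = l := by
  rw [supp_phi hx, Finset.card_image_of_injective _ x.2.injective, card_univ,
    Fintype.card_fin]

lemma prod_fact_phi (hx : Cond p x) :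
    (∏ i, ∏ u, ((phi x i u).factorial : ℝ)) =
      ∏ i, ∏ j, (((x.1 i j : ℕ)).factorial : ℝ) := by
  refine Finset.prod_congr rfl fun i _ => ?_
  rw [prod_emb x.2 (fun u => ((phi x i u).factorial : ℝ))]
  · refine Finset.prod_congr rfl fun j _ => ?_
    rw [phi_apply_emb]
  · intro u hu
    rw [phi_apply_of_notmem x i hu]
    simp

lemma prod_pow_phi (hx : Cond p x) (f : Fin q → U → ℝ) :
    (∏ i, ∏ u, f i u ^ phi x i u) = ∏ i, ∏ j, f i (x.2 j) ^ (x.1 i j : ℕ) := by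
  refine Finset.prod_congr rfl fun i _ => ?_
  rw [prod_emb x.2 (fun u => f i u ^ phi x i u)]
  · refine Finset.prod_congr rfl fun j _ => ?_
    rw [phi_apply_emb]
  · intro u hu
    rw [phi_apply_of_notmem x i hu]
    simp

end CondLemmas

/-- The fiber of `phi` over `m` (with the condition) has cardinality `l !`. -/
lemma card_fiber (p : Fin q → ℕ) (hpN : ∀ i, p i ≤ N) {l : ℕ} (m : Fin q → U → ℕ)
    (hm : ∀ i, ∑ u, m i u = p i) (hcard : (supp m).card = l) :
    ((univ : Finset ((Fin q → Fin l → Fin (N + 1)) × (Fin l ↪ U))).filter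
        (fun x => Cond p x ∧ phi x = m)).card = Nat.factorial l := by
  classical
  have hcardU : Fintype.card {u // u ∈ supp m} = l := by
    rw [Fintype.card_coe]; exact hcard
  have key : ((univ : Finset ((Fin q → Fin l → Fin (N + 1)) × (Fin l ↪ U))).filter
      (fun x => Cond p x ∧ phi x = m)).card =
      (univ : Finset (Fin l ↪ {u // u ∈ supp m})).card := by
    -- forward map
    refine Finset.card_bij'
      (fun x hx => ⟨fun j => ⟨x.2 j, ?_⟩, fun j j' h => x.2.injective (congrArg Subtype.val h)⟩)
      (fun e _ => (⟨fun i j => ⟨m i ((e j : {u // u ∈ supp m}) : U), ?_⟩,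
        e.trans (Function.Embedding.subtype _)⟩ :
        (Fin q → Fin l → Fin (N + 1)) × (Fin l ↪ U))) ?_ ?_ ?_ ?_
    · -- x.2 j ∈ supp m
      simp only [mem_filter, mem_univ, true_and] at hx
      obtain ⟨hc, hphi⟩ := hx
      have := supp_phi hc
      rw [hphi] at this
      rw [this]
      exact mem_image.mpr ⟨j, mem_univ j, rfl⟩
    · -- m i (e j) < N + 1
      exact Nat.lt_succ_of_le (le_trans (Finset.single_le_sum
        (fun u _ => Nat.zero_le _) (mem_univ _)) (le_trans (le_of_eq (hm i)) (hpN i)))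
    · -- hi : forward maps into univ
      intro x hx
      exact mem_univ _
    · -- hj : inverse maps into the fiber
      intro e _
      simp only [mem_filter, mem_univ, true_and]
      have hbij : Function.Bijective e :=
        (Fintype.bijective_iff_injective_and_card e).mpr
          ⟨e.injective, by rw [Fintype.card_fin, hcardU]⟩
      have hrow : ∀ i, ∑ j, m i ((e j : {u // u ∈ supp m}) : U) = p i := by
        intro i
        have h1 : ∑ j, m i ((e j : {u // u ∈ supp m}) : U) =
            ∑ u : {u // u ∈ supp m}, m i (u : U) :=
          Fintype.sum_bijective e hbij _ _ fun j => rfl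
        rw [h1, Finset.sum_coe_sort (supp m) (fun u => m i u)]
        rw [Finset.sum_subset (subset_univ (supp m)) fun u _ hu => notmem_supp hu i]
        exact hm i
      refine ⟨⟨?_, ?_⟩, ?_⟩
      · intro j
        have h2 := (e j).2
        simp only [supp, mem_filter, mem_univ, true_and] at h2
        exact h2
      · intro i
        exact hrow i
      · funext i u
        by_cases hu : u ∈ supp m
        · obtain ⟨j₀, hj₀⟩ := hbij.2 ⟨u, hu⟩
          have h2 : ((e j₀ : {u // u ∈ supp m}) : U) = u := by rw [hj₀]
          rw [phi, Finset.sum_eq_single_of_mem j₀ (mem_univ _)]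
          · show (if ((e j₀ : {u // u ∈ supp m}) : U) = u
                then m i ((e j₀ : {u // u ∈ supp m}) : U) else 0) = m i u
            rw [if_pos h2, h2]
          · intro j' _ hne
            show (if ((e j' : {u // u ∈ supp m}) : U) = u
                then m i ((e j' : {u // u ∈ supp m}) : U) else 0) = 0
            rw [if_neg]
            intro h
            refine hne (e.injective ?_)
            rw [hj₀]
            exact Subtype.ext h
        · have h0 : m i u = 0 := notmem_supp hu i
          rw [phi, h0]
          refine Finset.sum_eq_zero fun j' _ => ?_
          show (if ((e j' : {u // u ∈ supp m}) : U) = u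
              then m i ((e j' : {u // u ∈ supp m}) : U) else 0) = 0
          by_cases h : ((e j' : {u // u ∈ supp m}) : U) = u
          · rw [if_pos h, h, h0]
          · rw [if_neg h]
    · -- left inverse
      intro x hx
      simp only [mem_filter, mem_univ, true_and] at hx
      obtain ⟨hc, hphi⟩ := hx
      refine Prod.ext ?_ ?_
      · funext i j
        refine Fin.ext ?_
        show m i (x.2 j) = ((x.1 i j : ℕ))
        rw [← hphi]
        exact phi_apply_emb x i j
      · ext j
        rfl
    · -- right inverse
      intro e _
      ext j
      rfl
  rw [key, card_univ, Fintype.card_embedding_eq, hcardU, Fintype.card_fin,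
    Nat.descFactorial_self]

lemma lhs_eq (p : Fin q → ℕ) (f : Fin q → U → ℝ) :
    ∏ i : Fin q, (∑ u : U, f i u) ^ p i =
      ∑ m ∈ Fintype.piFinset (fun i : Fin q => Finset.piAntidiag (univ : Finset U) (p i)),
        ((∏ i, ((p i).factorial : ℝ)) / ∏ i, ∏ u, ((m i u).factorial : ℝ)) *
          ∏ i, ∏ u, f i u ^ m i u := by
  have h1 : ∀ i : Fin q, (∑ u : U, f i u) ^ p i =
      ∑ k ∈ Finset.piAntidiag (univ : Finset U) (p i),
        (Nat.multinomial univ k : ℝ) * ∏ u, f i u ^ k u := fun i =>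
    Finset.sum_pow_eq_sum_piAntidiag _ _ _
  rw [Finset.prod_congr rfl fun i _ => h1 i, Finset.prod_univ_sum]
  refine Finset.sum_congr rfl fun m hm => ?_
  rw [Finset.prod_mul_distrib]
  congr 1
  rw [Fintype.mem_piFinset] at hm
  have hne : (∏ i : Fin q, ∏ u : U, ((m i u).factorial : ℝ)) ≠ 0 :=
    ne_of_gt (Finset.prod_pos fun i _ => Finset.prod_pos fun u _ =>
      Nat.cast_pos.mpr (Nat.factorial_pos _))
  rw [eq_div_iff hne, ← Finset.prod_mul_distrib]
  refine Finset.prod_congr rfl fun i _ => ?_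
  have h2 := Nat.multinomial_spec (univ : Finset U) (m i)
  have h3 : ∑ u, m i u = p i := ((Finset.mem_piAntidiag).mp (hm i)).1
  calc (Nat.multinomial univ (m i) : ℝ) * ∏ u, ((m i u).factorial : ℝ)
      = (((∏ u, (m i u).factorial) * Nat.multinomial univ (m i) : ℕ) : ℝ) := by
        push_cast; ring
    _ = ((p i).factorial : ℝ) := by rw [h2, h3]

end SumProdExpAux

/-- Multinomial-type expansion of `∏ i (∑_u f i u)^(p i)` over a finite set `U`,
grouped by the number `l` of distinct elements used and the multiplicity matrix `M`.
The inner sum over subsets `V ⊆ U` with `|V| = l` (with an enumeration) is made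
precise by summing over injections `Fin l ↪ U` and dividing by `l!`. -/
theorem sum_product_expansion {U : Type*} [Fintype U] [DecidableEq U]
    (q : ℕ) (hq : 1 ≤ q) (p : Fin q → ℕ) (hp : 0 < ∑ i, p i)
    (f : Fin q → U → ℝ) (hf : ∀ i u, 0 ≤ f i u) :
    ∏ i : Fin q, (∑ u : U, f i u) ^ p i =
      ∑ l ∈ Finset.Icc 1 (min (∑ i, p i) (Fintype.card U)),
        ∑ M : Fin q → Fin l → Fin ((∑ i, p i) + 1),
          if (∀ j : Fin l, 0 < ∑ i : Fin q, (M i j : ℕ)) ∧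
             (∀ i : Fin q, ∑ j : Fin l, (M i j : ℕ) = p i) then
            ((∏ i : Fin q, (Nat.factorial (p i) : ℝ)) /
                (∏ i : Fin q, ∏ j : Fin l, (Nat.factorial (M i j) : ℝ))) /
              (Nat.factorial l : ℝ) *
            ∑ v : Fin l ↪ U, ∏ i : Fin q, ∏ j : Fin l, (f i (v j)) ^ ((M i j : ℕ))
          else 0 := by
  classical
  open SumProdExpAux in
  rw [SumProdExpAux.lhs_eq p f]
  set N := ∑ i, p i with hN
  set A := Fintype.piFinset (fun i : Fin q => Finset.piAntidiag (univ : Finset U) (p i))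
    with hA
  set W : (Fin q → U → ℕ) → ℝ := fun m =>
    ((∏ i, ((p i).factorial : ℝ)) / ∏ i, ∏ u, ((m i u).factorial : ℝ)) *
      ∏ i, ∏ u, f i u ^ m i u with hW
  have hpN : ∀ i, p i ≤ N :=
    fun i => Finset.single_le_sum (fun _ _ => Nat.zero_le _) (mem_univ i)
  have hmemA : ∀ m ∈ A, ∀ i, ∑ u, m i u = p i := by
    intro m hm i
    rw [hA, Fintype.mem_piFinset] at hm
    exact ((Finset.mem_piAntidiag).mp (hm i)).1
  -- Step 1: rewrite each inner double sum as a sum over pairs restricted to the condition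
  have step1 : ∀ l : ℕ,
      (∑ M : Fin q → Fin l → Fin (N + 1),
          if (∀ j : Fin l, 0 < ∑ i : Fin q, (M i j : ℕ)) ∧
             (∀ i : Fin q, ∑ j : Fin l, (M i j : ℕ) = p i) then
            ((∏ i : Fin q, (Nat.factorial (p i) : ℝ)) /
                (∏ i : Fin q, ∏ j : Fin l, (Nat.factorial (M i j) : ℝ))) /
              (Nat.factorial l : ℝ) *
            ∑ v : Fin l ↪ U, ∏ i : Fin q, ∏ j : Fin l, (f i (v j)) ^ ((M i j : ℕ))
          else 0) =
      ∑ x ∈ (univ : Finset ((Fin q → Fin l → Fin (N + 1)) × (Fin l ↪ U))).filter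
          (fun x => SumProdExpAux.Cond p x),
        ((∏ i : Fin q, (Nat.factorial (p i) : ℝ)) /
            (∏ i : Fin q, ∏ j : Fin l, (Nat.factorial (x.1 i j) : ℝ))) /
          (Nat.factorial l : ℝ) *
          ∏ i : Fin q, ∏ j : Fin l, (f i (x.2 j)) ^ ((x.1 i j : ℕ)) := by
    intro l
    rw [Finset.sum_filter, Fintype.sum_prod_type]
    refine Finset.sum_congr rfl fun M _ => ?_
    by_cases h : (∀ j : Fin l, 0 < ∑ i : Fin q, (M i j : ℕ)) ∧
        (∀ i : Fin q, ∑ j : Fin l, (M i j : ℕ) = p i)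
    · rw [if_pos h, Finset.mul_sum]
      refine Finset.sum_congr rfl fun v _ => ?_
      rw [if_pos (show SumProdExpAux.Cond p (M, v) from h)]
    · rw [if_neg h]
      exact (Finset.sum_eq_zero fun v _ =>
        if_neg fun hc => h hc).symm
  -- Step 2: each pair-sum fibers over A
  have step2 : ∀ l : ℕ,
      (∑ x ∈ (univ : Finset ((Fin q → Fin l → Fin (N + 1)) × (Fin l ↪ U))).filter
          (fun x => SumProdExpAux.Cond p x),
        ((∏ i : Fin q, (Nat.factorial (p i) : ℝ)) /
            (∏ i : Fin q, ∏ j : Fin l, (Nat.factorial (x.1 i j) : ℝ))) /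
          (Nat.factorial l : ℝ) *
          ∏ i : Fin q, ∏ j : Fin l, (f i (x.2 j)) ^ ((x.1 i j : ℕ))) =
      ∑ m ∈ A, if (SumProdExpAux.supp m).card = l then W m else 0 := by
    intro l
    have maps : ∀ x ∈ (univ : Finset ((Fin q → Fin l → Fin (N + 1)) × (Fin l ↪ U))).filter
        (fun x => SumProdExpAux.Cond p x), SumProdExpAux.phi x ∈ A := by
      intro x hx
      rw [mem_filter] at hx
      rw [hA, Fintype.mem_piFinset]
      intro i
      rw [Finset.mem_piAntidiag]
      exact ⟨SumProdExpAux.row_sum_phi hx.2 i, fun u _ => mem_univ u⟩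
    rw [← Finset.sum_fiberwise_of_maps_to maps]
    refine Finset.sum_congr rfl fun m hm => ?_
    rw [Finset.filter_filter]
    by_cases h : (SumProdExpAux.supp m).card = l
    · rw [if_pos h]
      have hconst : ∀ x ∈ (univ : Finset ((Fin q → Fin l → Fin (N + 1)) × (Fin l ↪ U))).filter
          (fun x => SumProdExpAux.Cond p x ∧ SumProdExpAux.phi x = m),
          (((∏ i : Fin q, (Nat.factorial (p i) : ℝ)) /
            (∏ i : Fin q, ∏ j : Fin l, (Nat.factorial (x.1 i j) : ℝ))) /
          (Nat.factorial l : ℝ) *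
          ∏ i : Fin q, ∏ j : Fin l, (f i (x.2 j)) ^ ((x.1 i j : ℕ))) =
          W m / (Nat.factorial l : ℝ) := by
        intro x hx
        rw [mem_filter] at hx
        obtain ⟨-, hc, hphi⟩ := hx
        have e1 : (∏ i, ∏ u, ((m i u).factorial : ℝ)) =
            ∏ i : Fin q, ∏ j : Fin l, (Nat.factorial (x.1 i j) : ℝ) := by
          rw [← hphi]
          exact SumProdExpAux.prod_fact_phi hc
        have e2 : (∏ i, ∏ u, f i u ^ m i u) =
            ∏ i : Fin q, ∏ j : Fin l, (f i (x.2 j)) ^ ((x.1 i j : ℕ)) := by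
          rw [← hphi]
          exact SumProdExpAux.prod_pow_phi hc f
        rw [hW]
        rw [← e1, ← e2]
        ring
      rw [Finset.sum_congr rfl hconst, Finset.sum_const,
        SumProdExpAux.card_fiber p hpN m (hmemA m hm) h, nsmul_eq_mul]
      rw [mul_div_assoc']
      rw [mul_comm, mul_div_assoc]
      rw [div_self (Nat.cast_ne_zero.mpr (Nat.factorial_ne_zero l)), mul_one]
    · rw [if_neg h]
      refine Finset.sum_eq_zero fun x hx => ?_
      rw [mem_filter] at hx
      exact absurd (by rw [← hx.2.2]; exact SumProdExpAux.card_supp_phi hx.2.1) h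
  -- Step 3: combine
  calc (∑ m ∈ A, W m)
      = ∑ m ∈ A, ∑ l ∈ Finset.Icc 1 (min N (Fintype.card U)),
          if (SumProdExpAux.supp m).card = l then W m else 0 := by
        refine Finset.sum_congr rfl fun m hm => ?_
        rw [Finset.sum_ite_eq (Finset.Icc 1 (min N (Fintype.card U)))
          ((SumProdExpAux.supp m).card) (fun _ => W m)]
        rw [if_pos]
        rw [Finset.mem_Icc]
        constructor
        · -- 1 ≤ card supp m
          rw [Nat.one_le_iff_ne_zero]
          intro hc
          rw [Finset.card_eq_zero] at hc
          have htot : ∑ u : U, ∑ i, m i u = N := by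
            rw [Finset.sum_comm]
            exact Finset.sum_congr rfl fun i _ => hmemA m hm i
          have : ∀ u : U, ∑ i, m i u = 0 := by
            intro u
            have : u ∉ SumProdExpAux.supp m := by rw [hc]; exact notMem_empty u
            simpa [SumProdExpAux.supp, Nat.pos_iff_ne_zero] using this
          rw [Finset.sum_congr rfl fun u _ => this u] at htot
          simp at htot
          omega
        · refine le_min ?_ ?_
          · calc (SumProdExpAux.supp m).card
                = ∑ u ∈ SumProdExpAux.supp m, 1 := (Finset.card_eq_sum_ones _)
              _ ≤ ∑ u ∈ SumProdExpAux.supp m, ∑ i, m i u :=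
                  Finset.sum_le_sum fun u hu => (mem_filter.mp hu).2
              _ ≤ ∑ u : U, ∑ i, m i u :=
                  Finset.sum_le_sum_of_subset (filter_subset _ _)
              _ = N := by
                  rw [Finset.sum_comm]
                  exact Finset.sum_congr rfl fun i _ => hmemA m hm i
          · calc (SumProdExpAux.supp m).card ≤ (univ : Finset U).card :=
                  Finset.card_filter_le _ _
              _ = Fintype.card U := Finset.card_univ
    _ = ∑ l ∈ Finset.Icc 1 (min N (Fintype.card U)), ∑ m ∈ A,
          if (SumProdExpAux.supp m).card = l then W m else 0 := Finset.sum_comm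
    _ = _ := by
        refine Finset.sum_congr rfl fun l _ => ?_
        rw [step1 l, step2 l]
end

section
/- For α > 2, δ = 2/α, m ∈ ℕ with m ≥ 1, and θ' > 0, the integral ∫_{ℝ²} (1 − (1 + θ'‖x‖^{−α})^{−m}) dx equals π θ'^δ Γ(1−δ) Γ(m+δ) / Γ(m). -/
open scoped Real
open MeasureTheory Set Filter

namespace NakagamiAux

/-- The real Beta integral on `(0,1)`. -/
lemma beta_Ioo (a b : ℝ) (ha : 0 < a) (hb : 0 < b) :
    ∫ t in Ioo (0:ℝ) 1, t ^ (a-1) * (1-t) ^ (b-1) =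
      Real.Gamma a * Real.Gamma b / Real.Gamma (a+b) := by
  have hab : 0 < a + b := by linarith
  have key : Complex.betaIntegral a b =
      ((∫ t in (0:ℝ)..1, t ^ (a-1) * (1-t) ^ (b-1) : ℝ) : ℂ) := by
    rw [Complex.betaIntegral, ← intervalIntegral.integral_ofReal]
    refine intervalIntegral.integral_congr fun t ht => ?_
    rw [uIcc_of_le zero_le_one] at ht
    push_cast
    rw [Complex.ofReal_cpow ht.1, Complex.ofReal_cpow (by linarith [ht.2])]
    push_cast
    ring
  have h := Complex.Gamma_mul_Gamma_eq_betaIntegral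
      (s := (a:ℂ)) (t := (b:ℂ)) (by simpa using ha) (by simpa using hb)
  rw [key, ← Complex.ofReal_add, Complex.Gamma_ofReal, Complex.Gamma_ofReal,
    Complex.Gamma_ofReal, ← Complex.ofReal_mul, ← Complex.ofReal_mul] at h
  have h' : Real.Gamma a * Real.Gamma b =
      Real.Gamma (a+b) * ∫ t in (0:ℝ)..1, t ^ (a-1) * (1-t) ^ (b-1) := by
    exact_mod_cast h
  rw [intervalIntegral.integral_of_le zero_le_one, integral_Ioc_eq_integral_Ioo] at h'
  rw [eq_div_iff (Real.Gamma_pos_of_pos hab).ne', mul_comm] at *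
  linarith [h']

lemma phi_image : (fun t : ℝ => t / (1 - t)) '' Ioo 0 1 = Ioi 0 := by
  ext x
  constructor
  · rintro ⟨t, ⟨ht0, ht1⟩, rfl⟩
    exact div_pos ht0 (by linarith)
  · intro hx
    have hx' : 0 < x := hx
    refine ⟨x / (1 + x), ⟨div_pos hx' (by linarith), ?_⟩, ?_⟩
    · rw [div_lt_one (by linarith)]; linarith
    · have h1x : (0:ℝ) < 1 + x := by linarith
      field_simp
      ring

/-- The Beta integral over `(0,∞)`. -/
lemma beta_Ioi (a b : ℝ) (ha : 0 < a) (hb : 0 < b) :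
    ∫ x in Ioi (0:ℝ), x ^ (a-1) * (1+x) ^ (-(a+b)) =
      Real.Gamma a * Real.Gamma b / Real.Gamma (a+b) := by
  rw [← beta_Ioo a b ha hb, ← phi_image]
  rw [integral_image_eq_integral_abs_deriv_smul measurableSet_Ioo
      (f' := fun t => ((1-t)^2)⁻¹)
      (fun t ht => ?_) (fun t ht s hs hts => ?_) (fun x => x ^ (a-1) * (1+x) ^ (-(a+b)))]
  · refine setIntegral_congr_fun measurableSet_Ioo fun t ht => ?_
    obtain ⟨ht0, ht1⟩ := ht
    have h1t : (0:ℝ) < 1 - t := by linarith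
    have h1 : 1 + t / (1-t) = (1-t)⁻¹ := by field_simp; ring
    have e1 : |((1-t)^2)⁻¹| = (1-t) ^ (-2 : ℝ) := by
      rw [abs_of_pos (by positivity), ← Real.rpow_two, ← Real.rpow_neg h1t.le]
    rw [smul_eq_mul, h1, e1, Real.div_rpow ht0.le h1t.le,
      Real.inv_rpow h1t.le, ← Real.rpow_neg h1t.le, neg_neg, div_eq_mul_inv,
      ← Real.rpow_neg h1t.le]
    rw [show (1-t)^(-2:ℝ) * (t ^ (a-1) * (1-t) ^ (-(a-1)) * (1-t)^(a+b)) =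
        t ^ (a-1) * ((1-t)^(-2:ℝ) * (1-t) ^ (-(a-1)) * (1-t)^(a+b)) by ring,
      ← Real.rpow_add h1t, ← Real.rpow_add h1t]
    congr 1
    ring
  · have h1t : (1:ℝ) - t ≠ 0 := ne_of_gt (by linarith [ht.2])
    have hd : HasDerivAt (fun t : ℝ => t / (1 - t)) (((1-t)^2)⁻¹) t := by
      have := (hasDerivAt_id t).div ((hasDerivAt_id t).const_sub 1) h1t
      refine this.congr_deriv ?_
      simp only [id_eq]
      field_simp
      ring
    exact hd.hasDerivWithinAt
  · have h1t : (0:ℝ) < 1 - t := by linarith [ht.2]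
    have h1s : (0:ℝ) < 1 - s := by linarith [hs.2]
    field_simp at hts
    nlinarith [hts]

/-- Basic inequalities for `F x = 1 - (1+x)^(-m)`. -/
lemma F_nonneg (m : ℕ) {x : ℝ} (hx : 0 ≤ x) : 0 ≤ 1 - (1+x) ^ (-(m:ℝ)) := by
  have : (1+x) ^ (-(m:ℝ)) ≤ 1 :=
    Real.rpow_le_one_of_one_le_of_nonpos (by linarith) (neg_nonpos.mpr (Nat.cast_nonneg m))
  linarith

lemma F_le_one (m : ℕ) {x : ℝ} (hx : 0 ≤ x) : 1 - (1+x) ^ (-(m:ℝ)) ≤ 1 := by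
  have : 0 ≤ (1+x) ^ (-(m:ℝ)) := Real.rpow_nonneg (by linarith) _
  linarith

lemma F_le (m : ℕ) {x : ℝ} (hx : 0 ≤ x) : 1 - (1+x) ^ (-(m:ℝ)) ≤ m * x := by
  have h1x : (0:ℝ) < 1 + x := by linarith
  have e : (1+x) ^ (-(m:ℝ)) = ((1+x) ^ m)⁻¹ := by
    rw [← Real.rpow_natCast (1+x) m, ← Real.rpow_neg h1x.le]
  have hi : ((1+x)⁻¹) * (1+x) = 1 := inv_mul_cancel₀ h1x.ne'
  have ha : (-2:ℝ) ≤ (1+x)⁻¹ - 1 := by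
    have : (0:ℝ) ≤ (1+x)⁻¹ := by positivity
    linarith
  have key : 1 + (m:ℝ) * ((1+x)⁻¹ - 1) ≤ ((1+x) ^ m)⁻¹ := by
    have := one_add_mul_le_pow ha m
    rwa [show (1:ℝ) + ((1+x)⁻¹ - 1) = (1+x)⁻¹ by ring, inv_pow] at this
  have h2 : 1 - (1+x)⁻¹ ≤ x := by nlinarith [hi, inv_nonneg.mpr h1x.le]
  rw [e]
  nlinarith [key, h2, Nat.cast_nonneg (α := ℝ) m]

lemma J_eval (δ : ℝ) (hδ0 : 0 < δ) (hδ1 : δ < 1) (m : ℕ) (hm : 1 ≤ m) :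
    ∫ x in Ioi (0:ℝ), (1 - (1+x) ^ (-(m:ℝ))) * x ^ (-δ-1) =
      Real.Gamma (1-δ) * Real.Gamma ((m:ℝ)+δ) / (δ * Real.Gamma (m:ℝ)) := by
  have hm0 : (0:ℝ) < (m:ℝ) := by exact_mod_cast hm
  set u : ℝ → ℝ := fun x => 1 - (1+x) ^ (-(m:ℝ)) with hu_def
  set u' : ℝ → ℝ := fun x => (m:ℝ) * (1+x) ^ (-(m:ℝ)-1) with hu'_def
  set v : ℝ → ℝ := fun x => -(1/δ) * x ^ (-δ) with hv_def
  set v' : ℝ → ℝ := fun x => x ^ (-δ-1) with hv'_def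
  -- continuity facts
  have contPow : ∀ p : ℝ, ContinuousOn (fun x : ℝ => x ^ p) (Ioi 0) := fun p =>
    continuousOn_id.rpow_const (fun x hx => Or.inl (ne_of_gt hx))
  have contF : ContinuousOn u (Ioi 0) :=
    continuousOn_const.sub ((continuousOn_const.add continuousOn_id).rpow_const
      (fun x hx => Or.inl (by simp only [mem_Ioi] at hx; intro h; simp only [Pi.add_apply, id_eq] at h; linarith)))
  have contG : ContinuousOn u' (Ioi 0) :=
    continuousOn_const.mul ((continuousOn_const.add continuousOn_id).rpow_const
      (fun x hx => Or.inl (by simp only [mem_Ioi] at hx; intro h; simp only [Pi.add_apply, id_eq] at h; linarith)))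
  have contuv' : ContinuousOn (fun x => u x * v' x) (Ioi 0) := contF.mul (contPow _)
  have contu'v : ContinuousOn (fun x => u' x * v x) (Ioi 0) :=
    contG.mul (continuousOn_const.mul (contPow _))
  have hsplit : Ioi (0:ℝ) = Ioc 0 1 ∪ Ioi 1 := (Ioc_union_Ioi_eq_Ioi zero_le_one).symm
  have hIocsub : Ioc (0:ℝ) 1 ⊆ Ioi 0 := Ioc_subset_Ioi_self
  have hIoisub : Ioi (1:ℝ) ⊆ Ioi 0 := Ioi_subset_Ioi zero_le_one
  -- base integrable functions
  have hbase0 : ∀ c : ℝ, IntegrableOn (fun x : ℝ => c * x ^ (-δ)) (Ioc 0 1) := by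
    intro c
    have h := intervalIntegral.intervalIntegrable_rpow' (a := (0:ℝ)) (b := 1)
      (by linarith : (-1:ℝ) < -δ)
    rw [intervalIntegrable_iff_integrableOn_Ioc_of_le zero_le_one] at h
    exact h.const_mul c
  have hbase1 : ∀ c : ℝ, IntegrableOn (fun x : ℝ => c * x ^ (-δ-1)) (Ioi 1) := fun c =>
    (integrableOn_Ioi_rpow_of_lt (by linarith) zero_lt_one).const_mul c
  -- integrability of u * v'
  have huv'_int : IntegrableOn (fun x => u x * v' x) (Ioi 0) := by
    rw [hsplit]
    refine IntegrableOn.union ?_ ?_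
    · refine Integrable.mono' (hbase0 (m:ℝ)) ((contuv'.mono hIocsub).aestronglyMeasurable
        measurableSet_Ioc) ?_
      refine (ae_restrict_iff' measurableSet_Ioc).mpr (Eventually.of_forall fun x hx => ?_)
      obtain ⟨hx0, _⟩ := hx
      have hxp : (0:ℝ) < x ^ (-δ-1) := Real.rpow_pos_of_pos hx0 _
      rw [Real.norm_eq_abs, abs_of_nonneg (mul_nonneg (F_nonneg m hx0.le) hxp.le)]
      calc u x * v' x ≤ ((m:ℝ) * x) * x ^ (-δ-1) :=
            mul_le_mul_of_nonneg_right (F_le m hx0.le) hxp.le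
        _ = (m:ℝ) * x ^ (-δ) := by
            rw [mul_assoc, show x * x ^ (-δ-1) = x ^ (1+(-δ-1)) from by
              rw [Real.rpow_add hx0, Real.rpow_one], show (1:ℝ)+(-δ-1) = -δ by ring]
    · refine Integrable.mono' (hbase1 1) ((contuv'.mono hIoisub).aestronglyMeasurable
        measurableSet_Ioi) ?_
      refine (ae_restrict_iff' measurableSet_Ioi).mpr (Eventually.of_forall fun x hx => ?_)
      have hx0 : (0:ℝ) < x := lt_trans zero_lt_one hx
      have hxp : (0:ℝ) < x ^ (-δ-1) := Real.rpow_pos_of_pos hx0 _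
      rw [Real.norm_eq_abs, abs_of_nonneg (mul_nonneg (F_nonneg m hx0.le) hxp.le), one_mul]
      exact mul_le_of_le_one_left hxp.le (F_le_one m hx0.le)
  -- integrability of u' * v
  have hu'v_abs : ∀ x : ℝ, 0 < x →
      |u' x * v x| = ((m:ℝ) * (1+x) ^ (-(m:ℝ)-1)) * ((1/δ) * x ^ (-δ)) := by
    intro x hx0
    have h1x : (0:ℝ) < 1 + x := by linarith
    have hA : (0:ℝ) ≤ (m:ℝ) * (1+x) ^ (-(m:ℝ)-1) := by positivity
    have hB : (0:ℝ) ≤ (1/δ) * x ^ (-δ) := by positivity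
    rw [abs_mul, abs_of_nonneg hA, show v x = -((1/δ) * x ^ (-δ)) by simp only [hv_def]; ring,
      abs_neg, abs_of_nonneg hB]
  have hu'v_int : IntegrableOn (fun x => u' x * v x) (Ioi 0) := by
    rw [hsplit]
    refine IntegrableOn.union ?_ ?_
    · refine Integrable.mono' (hbase0 ((m:ℝ)/δ)) ((contu'v.mono hIocsub).aestronglyMeasurable
        measurableSet_Ioc) ?_
      refine (ae_restrict_iff' measurableSet_Ioc).mpr (Eventually.of_forall fun x hx => ?_)
      obtain ⟨hx0, _⟩ := hx
      have h1x : (0:ℝ) < 1 + x := by linarith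
      rw [Real.norm_eq_abs, hu'v_abs x hx0]
      have hle : (1+x) ^ (-(m:ℝ)-1) ≤ 1 :=
        Real.rpow_le_one_of_one_le_of_nonpos (by linarith) (by
          have : (0:ℝ) ≤ (m:ℝ) := hm0.le
          linarith)
      have hxp : (0:ℝ) ≤ x ^ (-δ) := (Real.rpow_pos_of_pos hx0 _).le
      calc ((m:ℝ) * (1+x) ^ (-(m:ℝ)-1)) * ((1/δ) * x ^ (-δ))
          ≤ ((m:ℝ) * 1) * ((1/δ) * x ^ (-δ)) := by
            refine mul_le_mul_of_nonneg_right ?_ (by positivity)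
            exact mul_le_mul_of_nonneg_left hle hm0.le
        _ = ((m:ℝ)/δ) * x ^ (-δ) := by ring
    · refine Integrable.mono' (hbase1 ((m:ℝ)/δ)) ((contu'v.mono hIoisub).aestronglyMeasurable
        measurableSet_Ioi) ?_
      refine (ae_restrict_iff' measurableSet_Ioi).mpr (Eventually.of_forall fun x hx => ?_)
      have hx0 : (0:ℝ) < x := lt_trans zero_lt_one hx
      have h1x : (0:ℝ) < 1 + x := by linarith
      rw [Real.norm_eq_abs, hu'v_abs x hx0]
      have hle1 : (1+x) ^ (-(m:ℝ)-1) ≤ (1+x) ^ (-1:ℝ) :=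
        Real.rpow_le_rpow_of_exponent_le (by linarith) (by
          have : (0:ℝ) ≤ (m:ℝ) := hm0.le
          linarith)
      have hle2 : (1+x) ^ (-1:ℝ) ≤ x ^ (-1:ℝ) := by
        rw [Real.rpow_neg_one, Real.rpow_neg_one]
        exact inv_anti₀ hx0 (by linarith)
      have hxp : (0:ℝ) ≤ x ^ (-δ) := (Real.rpow_pos_of_pos hx0 _).le
      calc ((m:ℝ) * (1+x) ^ (-(m:ℝ)-1)) * ((1/δ) * x ^ (-δ))
          ≤ ((m:ℝ) * x ^ (-1:ℝ)) * ((1/δ) * x ^ (-δ)) := by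
            refine mul_le_mul_of_nonneg_right ?_ (by positivity)
            exact mul_le_mul_of_nonneg_left (hle1.trans hle2) hm0.le
        _ = ((m:ℝ)/δ) * (x ^ (-1:ℝ) * x ^ (-δ)) := by ring
        _ = ((m:ℝ)/δ) * x ^ (-δ-1) := by
            rw [← Real.rpow_add hx0, show (-1:ℝ) + -δ = -δ-1 by ring]
  -- derivatives
  have hu : ∀ x ∈ Ioi (0:ℝ), HasDerivAt u (u' x) x := by
    intro x hx
    have h1x : (0:ℝ) < 1 + x := by linarith [mem_Ioi.mp hx]
    have hbase : HasDerivAt (fun x : ℝ => 1 + x) 1 x := (hasDerivAt_id x).const_add 1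
    have hr : HasDerivAt (fun y : ℝ => y ^ (-(m:ℝ))) (-(m:ℝ) * (1+x) ^ (-(m:ℝ)-1)) (1+x) :=
      Real.hasDerivAt_rpow_const (Or.inl h1x.ne')
    have h2 := (hr.comp x hbase).const_sub 1
    refine h2.congr_deriv ?_
    simp [hu'_def]
  have hv : ∀ x ∈ Ioi (0:ℝ), HasDerivAt v (v' x) x := by
    intro x hx
    have hx0 : (0:ℝ) < x := hx
    have h2 := (Real.hasDerivAt_rpow_const (x := x) (p := -δ) (Or.inl hx0.ne')).const_mul (-(1/δ))
    refine h2.congr_deriv ?_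
    simp only [hv'_def]
    field_simp
  -- limits
  have h_zero : Tendsto (fun x => u x * v x) (nhdsWithin 0 (Ioi 0)) (nhds 0) := by
    apply squeeze_zero_norm' (a := fun x => ((m:ℝ)/δ) * x ^ (1-δ))
    · filter_upwards [Ioo_mem_nhdsGT_of_mem (⟨le_refl 0, zero_lt_one⟩ : (0:ℝ) ∈ Ico 0 1)]
        with x hx
      obtain ⟨hx0, _⟩ := hx
      have hF0 := F_nonneg m hx0.le
      have hFle := F_le m hx0.le
      have hxp : (0:ℝ) ≤ x ^ (-δ) := (Real.rpow_pos_of_pos hx0 _).le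
      have habs : ‖u x * v x‖ = u x * ((1/δ) * x ^ (-δ)) := by
        rw [Real.norm_eq_abs, abs_mul, abs_of_nonneg hF0,
          show v x = -((1/δ) * x ^ (-δ)) by simp only [hv_def]; ring, abs_neg,
          abs_of_nonneg (by positivity)]
      rw [habs]
      calc u x * ((1/δ) * x ^ (-δ)) ≤ ((m:ℝ) * x) * ((1/δ) * x ^ (-δ)) :=
            mul_le_mul_of_nonneg_right hFle (by positivity)
        _ = ((m:ℝ)/δ) * (x * x ^ (-δ)) := by ring
        _ = ((m:ℝ)/δ) * x ^ (1-δ) := by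
            rw [show x * x ^ (-δ) = x ^ (1 + -δ) from by rw [Real.rpow_add hx0, Real.rpow_one],
              show (1:ℝ) + -δ = 1-δ by ring]
    · have h1 : Tendsto (fun x : ℝ => x ^ (1-δ)) (nhds 0) (nhds 0) := by
        have := (Real.continuousAt_rpow_const 0 (1-δ) (Or.inr (by linarith))).tendsto
        rwa [Real.zero_rpow (by linarith : (1:ℝ)-δ ≠ 0)] at this
      have h2 : Tendsto (fun x : ℝ => x ^ (1-δ)) (nhdsWithin 0 (Ioi 0)) (nhds 0) :=
        h1.mono_left nhdsWithin_le_nhds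
      have := h2.const_mul ((m:ℝ)/δ)
      simpa using this
  have h_infty : Tendsto (fun x => u x * v x) atTop (nhds 0) := by
    have h1 : Tendsto u atTop (nhds 1) := by
      have h2 : Tendsto (fun x : ℝ => (1+x) ^ (-(m:ℝ))) atTop (nhds 0) :=
        (tendsto_rpow_neg_atTop hm0).comp (tendsto_atTop_add_const_left _ 1 tendsto_id)
      have := h2.const_sub 1
      simpa [hu_def] using this
    have h2 : Tendsto v atTop (nhds 0) := by
      have := (tendsto_rpow_neg_atTop hδ0).const_mul (-(1/δ))
      simpa [hv_def] using this
    have := h1.mul h2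
    simpa using this
  -- integration by parts
  have parts := integral_Ioi_mul_deriv_eq_deriv_mul hu hv huv'_int hu'v_int h_zero h_infty
  rw [sub_self, zero_sub] at parts
  have hshow : (∫ x in Ioi (0:ℝ), (1 - (1+x) ^ (-(m:ℝ))) * x ^ (-δ-1)) =
      ∫ x in Ioi (0:ℝ), u x * v' x := rfl
  rw [hshow]
  -- evaluate the remaining integral via the Beta integral
  have hKcongr : ∫ x in Ioi (0:ℝ), u' x * v x =
      (-(m/δ) : ℝ) * ∫ x in Ioi (0:ℝ), x ^ ((1-δ)-1) * (1+x) ^ (-((1-δ)+((m:ℝ)+δ))) := by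
    rw [← integral_const_mul]
    refine setIntegral_congr_fun measurableSet_Ioi fun x hx => ?_
    rw [show ((1-δ)-1 : ℝ) = -δ by ring, show (-((1-δ)+((m:ℝ)+δ)) : ℝ) = -(m:ℝ)-1 by ring]
    simp only [hu'_def, hv_def]
    ring
  have hK := beta_Ioi (1-δ) ((m:ℝ)+δ) (by linarith) (by linarith)
  have hGamma : Real.Gamma ((1-δ)+((m:ℝ)+δ)) = (m:ℝ) * Real.Gamma (m:ℝ) := by
    rw [show ((1-δ)+((m:ℝ)+δ) : ℝ) = (m:ℝ)+1 by ring, Real.Gamma_add_one hm0.ne']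
  rw [parts, hKcongr, hK, hGamma]
  have hG : Real.Gamma (m:ℝ) ≠ 0 := (Real.Gamma_pos_of_pos hm0).ne'
  field_simp

lemma radial_eval (α δ : ℝ) (hα : 2 < α) (hδ : δ = 2/α) (θ : ℝ) (hθ : 0 < θ) (m : ℕ) :
    ∫ r in Ioi (0:ℝ), r * (1 - (1 + θ * r ^ (-α)) ^ (-(m:ℝ))) =
      (θ ^ δ / α) * ∫ u in Ioi (0:ℝ), (1 - (1+u) ^ (-(m:ℝ))) * u ^ (-δ-1) := by
  have hα0 : (0:ℝ) < α := by linarith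
  have hαδ : α * δ = 2 := by rw [hδ]; field_simp
  have key := integral_comp_rpow_Ioi
    (fun y : ℝ => (1/α) * ((1 - (1 + θ*y) ^ (-(m:ℝ))) * y ^ (-δ-1)))
    (p := -α) (by exact ne_of_lt (by linarith) : (-α : ℝ) ≠ 0)
  have step1 : ∫ r in Ioi (0:ℝ), r * (1 - (1 + θ * r ^ (-α)) ^ (-(m:ℝ))) =
      ∫ x in Ioi (0:ℝ), (|(-α)| * x ^ (-α - 1)) •
        ((1/α) * ((1 - (1 + θ*(x ^ (-α))) ^ (-(m:ℝ))) * (x ^ (-α)) ^ (-δ-1))) := by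
    refine setIntegral_congr_fun measurableSet_Ioi fun x hx => ?_
    have hx0 : (0:ℝ) < x := hx
    rw [smul_eq_mul, abs_neg, abs_of_pos hα0,
      ← Real.rpow_mul hx0.le (-α) (-δ-1)]
    rw [show α * x ^ (-α-1) * ((1/α) * ((1 - (1 + θ*(x ^ (-α))) ^ (-(m:ℝ))) * x ^ ((-α)*(-δ-1)))) =
      (α/α) * ((1 - (1 + θ*(x ^ (-α))) ^ (-(m:ℝ))) * (x ^ (-α-1) * x ^ ((-α)*(-δ-1)))) by ring,
      div_self hα0.ne', one_mul, ← Real.rpow_add hx0,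
      show (-α-1) + (-α)*(-δ-1) = α*δ - 1 by ring, hαδ, show (2:ℝ)-1 = 1 by norm_num,
      Real.rpow_one]
    ring
  rw [step1, key]
  have step2 : ∫ y in Ioi (0:ℝ), (1/α) * ((1 - (1 + θ*y) ^ (-(m:ℝ))) * y ^ (-δ-1)) =
      ∫ y in Ioi (0:ℝ), (θ ^ (1+δ)/α) * ((1 - (1 + θ*y) ^ (-(m:ℝ))) * (θ*y) ^ (-δ-1)) := by
    refine setIntegral_congr_fun measurableSet_Ioi fun y hy => ?_
    have hy0 : (0:ℝ) < y := hy
    rw [Real.mul_rpow hθ.le hy0.le]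
    rw [show (θ ^ (1+δ)/α) * ((1 - (1 + θ*y) ^ (-(m:ℝ))) * (θ ^ (-δ-1) * y ^ (-δ-1))) =
      ((θ ^ (1+δ) * θ ^ (-δ-1))/α) * ((1 - (1 + θ*y) ^ (-(m:ℝ))) * y ^ (-δ-1)) by ring,
      ← Real.rpow_add hθ, show (1+δ) + (-δ-1) = 0 by ring, Real.rpow_zero]
  rw [step2, integral_const_mul]
  have step3 := integral_comp_mul_left_Ioi
    (fun u : ℝ => (1 - (1+u) ^ (-(m:ℝ))) * u ^ (-δ-1)) 0 hθ
  rw [mul_zero] at step3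
  rw [step3, smul_eq_mul]
  rw [show θ ^ (1+δ)/α * (θ⁻¹ * ∫ u in Ioi (0:ℝ), (1 - (1+u) ^ (-(m:ℝ))) * u ^ (-δ-1)) =
    (θ ^ (1+δ) * θ⁻¹ / α) * ∫ u in Ioi (0:ℝ), (1 - (1+u) ^ (-(m:ℝ))) * u ^ (-δ-1) by ring]
  congr 2
  rw [Real.rpow_add hθ, Real.rpow_one]
  field_simp

end NakagamiAux

open NakagamiAux

/-- For `α > 2`, `δ = 2/α`, integer `m ≥ 1`, and `θ' > 0`:
`∫_{ℝ²} (1 − (1 + θ'‖x‖^{−α})^{−m}) dx = π θ'^δ Γ(1−δ) Γ(m+δ)/Γ(m)`. -/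
theorem nakagami_success_exponent_integral (α : ℝ) (hα : 2 < α) (δ : ℝ)
    (hδ : δ = 2 / α) (m : ℕ) (hm : 1 ≤ m) (θ : ℝ) (hθ : 0 < θ) :
    (∫ x : EuclideanSpace ℝ (Fin 2),
        (1 - (1 + θ * ‖x‖ ^ (-α)) ^ (-(m : ℝ)))) =
      π * θ ^ δ * Real.Gamma (1 - δ) * Real.Gamma ((m : ℝ) + δ) /
        Real.Gamma (m : ℝ) := by
  have hα0 : (0:ℝ) < α := by linarith
  have hδ0 : 0 < δ := by rw [hδ]; positivity
  have hδ1 : δ < 1 := by rw [hδ]; rw [div_lt_one (by linarith)]; linarith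
  have hαδ : α * δ = 2 := by rw [hδ]; field_simp
  have hvol : (volume (Metric.ball (0 : EuclideanSpace ℝ (Fin 2)) 1)).toReal = π := by
    rw [EuclideanSpace.volume_ball]
    simp only [Fintype.card_fin]
    rw [show ((2:ℕ):ℝ)/2 + 1 = 2 by norm_num, Real.Gamma_two,
      Real.sq_sqrt Real.pi_pos.le]
    simp [Real.pi_pos.le]
  have polar := MeasureTheory.integral_fun_norm_addHaar
    (volume : Measure (EuclideanSpace ℝ (Fin 2)))
    (fun r : ℝ => 1 - (1 + θ * r ^ (-α)) ^ (-(m:ℝ)))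
  rw [show (∫ x : EuclideanSpace ℝ (Fin 2), (1 - (1 + θ * ‖x‖ ^ (-α)) ^ (-(m : ℝ)))) =
      ∫ x : EuclideanSpace ℝ (Fin 2),
        (fun r : ℝ => 1 - (1 + θ * r ^ (-α)) ^ (-(m:ℝ))) ‖x‖ from rfl, polar]
  simp only [finrank_euclideanSpace_fin, measureReal_def, hvol, pow_one, smul_eq_mul, nsmul_eq_mul]
  have congr1 : ∫ y in Ioi (0:ℝ), y ^ (2-1) * (1 - (1 + θ * y ^ (-α)) ^ (-(m:ℝ))) =
      ∫ r in Ioi (0:ℝ), r * (1 - (1 + θ * r ^ (-α)) ^ (-(m:ℝ))) := by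
    norm_num
  rw [congr1]  -- may not be needed
  rw [radial_eval α δ hα hδ θ hθ m, J_eval δ hδ0 hδ1 m hm]
  have hG : Real.Gamma (m:ℝ) ≠ 0 := (Real.Gamma_pos_of_pos (by exact_mod_cast hm)).ne'
  field_simp
  linear_combination (-Real.Gamma (1-δ)) * hαδ
end
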